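/- Let p^(1),...,p^(B) be random variables in [0,1], m^(1),...,m^(B) ≥ 1 constants, and I^(b) ∈ {0,1} indicators with p^(b) = 1 when I^(b) = 0 and P[p^(b) ≤ u] ≤ u/m^(b) for all u ∈ [0,1] when I^(b) = 1. Define Q(γ) as the γ-quantile aggregation min{1, q_γ(p^(1)m^(1)/γ,...,p^(B)m^(B)/γ)}. Then P[inf_{γ ∈ (γ_min,1)} Q(γ) ≤ α] ≤ (1 − log γ_min)(α/B) Σ_b I^(b)/m^(b) for all α ∈ (0,1) and γ_min ∈ (0,1). -/

import Mathlib

open MeasureTheory Finset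

/-- The empirical `γ`-quantile of the components of a vector `u ∈ ℝ^B`. -/
noncomputable def empQuantile5 {B : ℕ} (γ : ℝ) (u : Fin B → ℝ) : ℝ :=
  sInf {v : ℝ | ⌈γ * (B : ℝ)⌉₊ ≤ (univ.filter (fun b => u b ≤ v)).card}

lemma stmt5_ptwise {B : ℕ} (hB : 0 < B) (q : Fin B → ℝ) (m : Fin B → ℝ) (hm : ∀ b, 1 ≤ m b)
    (hp0 : ∀ b, 0 ≤ q b) (α α' γmin : ℝ) (hα'pos : 0 < α') (hαα' : α < α') (hα'1 : α' < 1)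
    (hγ0 : 0 < γmin) (hγ1 : γmin < 1)
    (h : sInf ((fun γ => min 1 (empQuantile5 γ (fun b => q b * m b / γ))) '' Set.Ioo γmin 1) ≤ α) :
    (B : ℝ) ≤ ∑ b, (if q b < α' / m b then (max γmin (q b * m b / α'))⁻¹ else 0) := by
  have hne : ((fun γ => min 1 (empQuantile5 γ (fun b => q b * m b / γ))) '' Set.Ioo γmin 1).Nonempty := by
    exact (Set.nonempty_Ioo.mpr hγ1).image _
  -- extract γ with Q(γ) < α'
  obtain ⟨x, hx, hxlt⟩ := exists_lt_of_csInf_lt hne (lt_of_le_of_lt h hαα')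
  obtain ⟨γ, hγmem, rfl⟩ := hx
  obtain ⟨hγlo, hγhi⟩ := hγmem
  have hγpos : 0 < γ := lt_trans hγ0 hγlo
  have hq : empQuantile5 γ (fun b => q b * m b / γ) < α' := by
    rcases min_lt_iff.mp hxlt with h1 | h2
    · linarith
    · exact h2
  -- the defining set is nonempty
  set u : Fin B → ℝ := fun b => q b * m b / γ with hu
  set S : Set ℝ := {v : ℝ | ⌈γ * (B : ℝ)⌉₊ ≤ (univ.filter (fun b => u b ≤ v)).card} with hS
  have huniv : (univ : Finset (Fin B)).Nonempty := univ_nonempty_iff.mpr (Fin.pos_iff_nonempty.mp hB)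
  have hSne : S.Nonempty := by
    refine ⟨univ.sup' huniv u, ?_⟩
    have hcard : (univ.filter (fun b => u b ≤ univ.sup' huniv u)) = univ := by
      apply filter_true_of_mem
      intro b _
      exact le_sup' u (mem_univ b)
    show ⌈γ * (B : ℝ)⌉₊ ≤ (univ.filter (fun b => u b ≤ univ.sup' huniv u)).card
    rw [hcard, card_univ, Fintype.card_fin]
    refine Nat.ceil_le.mpr ?_
    nlinarith [(Nat.cast_pos (α := ℝ)).mpr hB]
  obtain ⟨v, hvS, hvlt⟩ := exists_lt_of_csInf_lt hSne hq
  have hcount : ⌈γ * (B : ℝ)⌉₊ ≤ (univ.filter (fun b => u b ≤ α')).card := by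
    refine le_trans hvS (card_le_card ?_)
    intro b hb
    simp only [mem_filter] at hb ⊢
    exact ⟨hb.1, le_trans hb.2 hvlt.le⟩
  -- now the sum bound
  have hkey : ∀ b ∈ univ.filter (fun b => u b ≤ α'),
      γ⁻¹ ≤ (if q b < α' / m b then (max γmin (q b * m b / α'))⁻¹ else 0) := by
    intro b hb
    simp only [mem_filter] at hb
    have hmb : (0:ℝ) < m b := lt_of_lt_of_le one_pos (hm b)
    have hqm : q b * m b ≤ α' * γ := by
      have := (div_le_iff₀ hγpos).mp hb.2
      linarith [this]
    have h1 : q b < α' / m b := by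
      rw [lt_div_iff₀ hmb]
      nlinarith
    rw [if_pos h1]
    refine inv_anti₀ (lt_of_lt_of_le hγ0 (le_max_left _ _)) ?_
    refine max_le hγlo.le ?_
    rw [div_le_iff₀ hα'pos]
    nlinarith
  have hsum : (univ.filter (fun b => u b ≤ α')).card * γ⁻¹
      ≤ ∑ b, (if q b < α' / m b then (max γmin (q b * m b / α'))⁻¹ else 0) := by
    calc ((univ.filter (fun b => u b ≤ α')).card : ℝ) * γ⁻¹
        = ∑ _b ∈ univ.filter (fun b => u b ≤ α'), γ⁻¹ := by rw [sum_const, nsmul_eq_mul]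
      _ ≤ ∑ b ∈ univ.filter (fun b => u b ≤ α'),
            (if q b < α' / m b then (max γmin (q b * m b / α'))⁻¹ else 0) := sum_le_sum hkey
      _ ≤ ∑ b, (if q b < α' / m b then (max γmin (q b * m b / α'))⁻¹ else 0) := by
          refine sum_le_sum_of_subset_of_nonneg (filter_subset _ _) ?_
          intro b _ _
          positivity
  refine le_trans ?_ hsum
  have h2 : γ * (B:ℝ) ≤ (⌈γ * (B : ℝ)⌉₊ : ℝ) := Nat.le_ceil _
  have h3 : (⌈γ * (B : ℝ)⌉₊ : ℝ) ≤ ((univ.filter (fun b => u b ≤ α')).card : ℝ) := by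
    exact_mod_cast hcount
  calc (B:ℝ) = γ * B * γ⁻¹ := by field_simp
    _ ≤ ((univ.filter (fun b => u b ≤ α')).card : ℝ) * γ⁻¹ := by
        apply mul_le_mul_of_nonneg_right (le_trans h2 h3) (inv_nonneg.mpr hγpos.le)

lemma stmt5_int {Ω : Type*} [MeasurableSpace Ω] (μ : Measure Ω) [IsProbabilityMeasure μ]
    (X : Ω → ℝ) (hX : Measurable X) (m' α' γmin : ℝ) (hm : 1 ≤ m') (hα'0 : 0 < α') (hα'1 : α' < 1)
    (hγ0 : 0 < γmin) (hγ1 : γmin < 1)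
    (hsup : ∀ u ∈ Set.Icc (0:ℝ) 1, μ {ω | X ω ≤ u} ≤ ENNReal.ofReal (u / m')) :
    ∫⁻ ω, ENNReal.ofReal (if X ω < α' / m' then (max γmin (X ω * m' / α'))⁻¹ else 0) ∂μ
      ≤ ENNReal.ofReal ((1 - Real.log γmin) * (α' / m')) := by
  have hm0 : (0:ℝ) < m' := lt_of_lt_of_le one_pos hm
  set F : ℝ → ℝ := fun x => if x < α' / m' then (max γmin (x * m' / α'))⁻¹ else 0 with hF
  have hFmeas : Measurable F := by
    apply Measurable.ite (measurableSet_Iio (a := α' / m'))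
    · exact (measurable_const.max ((measurable_id.mul_const m').div_const α')).inv
    · exact measurable_const
  have hFnn : ∀ x, 0 ≤ F x := by
    intro x
    simp only [hF]
    split
    · exact inv_nonneg.mpr (le_trans hγ0.le (le_max_left _ _))
    · exact le_refl 0
  -- layer cake
  rw [lintegral_eq_lintegral_meas_lt μ (Filter.Eventually.of_forall fun ω => hFnn (X ω))
    (hFmeas.comp hX).aemeasurable]
  -- bound the tail probabilities
  have htail : ∀ t ∈ Set.Ioi (0:ℝ), μ {ω | t < F (X ω)} ≤
      (Set.Ioc (0:ℝ) 1).indicator (fun _ => ENNReal.ofReal (α' / (m' * m'))) t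
      + (Set.Ioc (1:ℝ) γmin⁻¹).indicator (fun t => ENNReal.ofReal (α' / (m' * m') * t⁻¹)) t := by
    intro t ht
    have ht0 : 0 < t := ht
    have hFle : ∀ x, F x ≤ γmin⁻¹ := by
      intro x
      simp only [hF]
      split
      · exact inv_anti₀ hγ0 (le_max_left _ _)
      · positivity
    by_cases hcase : t ≤ γmin⁻¹
    · -- subset bound
      have hsub : {ω | t < F (X ω)} ⊆ {ω | X ω ≤ (α' / m') * min 1 t⁻¹} := by
        intro ω hω
        simp only [Set.mem_setOf_eq] at hω ⊢
        simp only [hF] at hω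
        by_cases h1 : X ω < α' / m'
        · rw [if_pos h1] at hω
          have hmaxpos : 0 < max γmin (X ω * m' / α') := lt_of_lt_of_le hγ0 (le_max_left _ _)
          have h2 : max γmin (X ω * m' / α') < t⁻¹ := by
            have : t * (max γmin (X ω * m' / α')) < 1 := by
              have := (mul_lt_mul_of_pos_right hω hmaxpos)
              rwa [inv_mul_cancel₀ hmaxpos.ne'] at this
            have h' := mul_lt_mul_of_pos_left this (inv_pos.mpr ht0)
            rwa [← mul_assoc, inv_mul_cancel₀ ht0.ne', one_mul, mul_one] at h'
          have h3 : X ω * m' / α' < t⁻¹ := lt_of_le_of_lt (le_max_right _ _) h2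
          have h4 : X ω < α' / m' * t⁻¹ := by
            rw [div_lt_iff₀ hα'0] at h3
            rw [show α' / m' * t⁻¹ = t⁻¹ * α' / m' by ring, lt_div_iff₀ hm0]
            linarith
          rcases le_total (1:ℝ) t⁻¹ with hc | hc
          · rw [min_eq_left hc, mul_one]; exact h1.le
          · rw [min_eq_right hc]; exact h4.le
        · rw [if_neg h1] at hω; exact absurd hω (not_lt.mpr ht0.le)
      refine le_trans (measure_mono hsub) ?_
      have humem : (α' / m') * min 1 t⁻¹ ∈ Set.Icc (0:ℝ) 1 := by
        constructor
        · positivity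
        · have : min 1 t⁻¹ ≤ 1 := min_le_left _ _
          have h5 : α' / m' ≤ 1 := by
            rw [div_le_one hm0]; linarith
          nlinarith [div_pos hα'0 hm0]
      refine le_trans (hsup _ humem) ?_
      have heq : (α' / m') * min 1 t⁻¹ / m' = α' / (m' * m') * min 1 t⁻¹ := by
        field_simp
      rw [heq]
      rcases le_or_gt t 1 with h6 | h6
      · rw [Set.indicator_of_mem (Set.mem_Ioc.mpr ⟨ht0, h6⟩)]
        refine le_add_right (ENNReal.ofReal_le_ofReal ?_)
        have : min 1 t⁻¹ ≤ 1 := min_le_left _ _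
        nlinarith [div_pos hα'0 (mul_pos hm0 hm0)]
      · rw [Set.indicator_of_mem (Set.mem_Ioc.mpr ⟨h6, hcase⟩),
          Set.indicator_of_notMem (by simp [Set.mem_Ioc]; intro h; linarith)]
        rw [zero_add]
        refine ENNReal.ofReal_le_ofReal ?_
        have : min 1 t⁻¹ ≤ t⁻¹ := min_le_right _ _
        nlinarith [div_pos hα'0 (mul_pos hm0 hm0)]
    · -- empty
      have : {ω | t < F (X ω)} = ∅ := by
        ext ω
        simp only [Set.mem_setOf_eq, Set.mem_empty_iff_false, iff_false, not_lt]
        exact le_trans (hFle (X ω)) (le_of_not_ge hcase)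
      rw [this, measure_empty]
      exact zero_le
  have hmeas2 : Measurable fun t : ℝ =>
      (Set.Ioc (1:ℝ) γmin⁻¹).indicator (fun t => ENNReal.ofReal (α' / (m' * m') * t⁻¹)) t := by
    exact Measurable.indicator ((measurable_inv.const_mul _).ennreal_ofReal) measurableSet_Ioc
  refine le_trans (setLIntegral_mono ?_ htail) ?_
  · exact (measurable_const.indicator measurableSet_Ioc).add hmeas2
  -- compute the integral of the bound
  rw [lintegral_add_right _ hmeas2]
  have hI1 : ∫⁻ t in Set.Ioi (0:ℝ), (Set.Ioc (0:ℝ) 1).indicator (fun _ => ENNReal.ofReal (α' / (m' * m'))) t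
      = ENNReal.ofReal (α' / (m' * m')) := by
    rw [lintegral_indicator measurableSet_Ioc, Measure.restrict_restrict measurableSet_Ioc,
      Set.inter_eq_left.mpr Set.Ioc_subset_Ioi_self, setLIntegral_const,
      Real.volume_Ioc]
    norm_num
  have hc1 : (1:ℝ) < γmin⁻¹ := by
    rw [lt_inv_comm₀ one_pos hγ0, inv_one]; exact hγ1
  have hI2 : ∫⁻ t in Set.Ioi (0:ℝ),
      (Set.Ioc (1:ℝ) γmin⁻¹).indicator (fun t => ENNReal.ofReal (α' / (m' * m') * t⁻¹)) t
      = ENNReal.ofReal (α' / (m' * m') * Real.log γmin⁻¹) := by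
    rw [lintegral_indicator measurableSet_Ioc, Measure.restrict_restrict measurableSet_Ioc,
      Set.inter_eq_left.mpr (Set.Ioc_subset_Ioi_self.trans (Set.Ioi_subset_Ioi zero_le_one))]
    have hint : IntegrableOn (fun t : ℝ => α' / (m' * m') * t⁻¹) (Set.Ioc 1 γmin⁻¹) volume := by
      apply IntegrableOn.mono_set (t := Set.Icc 1 γmin⁻¹) ?_ Set.Ioc_subset_Icc_self
      apply ContinuousOn.integrableOn_Icc
      apply ContinuousOn.mul continuousOn_const
      apply ContinuousOn.inv₀ continuousOn_id
      intro x hx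
      exact (lt_of_lt_of_le zero_lt_one hx.1).ne'
    rw [← ofReal_integral_eq_lintegral_ofReal hint]
    · congr 1
      rw [← intervalIntegral.integral_of_le hc1.le,
        intervalIntegral.integral_const_mul, integral_inv]
      · rw [div_one]
      · intro hmem
        rw [Set.mem_uIcc] at hmem
        rcases hmem with ⟨_, h⟩ | ⟨h, _⟩ <;> linarith
    · filter_upwards [MeasureTheory.ae_restrict_mem measurableSet_Ioc] with t ht
      have : 0 < t := lt_trans zero_lt_one ht.1
      positivity
  rw [hI1, hI2, ← ENNReal.ofReal_add (by positivity)
    (mul_nonneg (by positivity) (Real.log_nonneg hc1.le))]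
  apply ENNReal.ofReal_le_ofReal
  rw [Real.log_inv]
  have hlog : Real.log γmin < 0 := Real.log_neg hγ0 hγ1
  have hmm : α' / (m' * m') ≤ α' / m' := by
    apply div_le_div_of_nonneg_left hα'0.le hm0
    nlinarith
  nlinarith [div_pos hα'0 (mul_pos hm0 hm0), div_pos hα'0 hm0]
/-- aggregation property of the adaptive quantile rule:
`P[inf_{γ ∈ (γ_min,1)} Q(γ) ≤ α] ≤ (1 − log γ_min)(α/B) Σ_b I^(b)/m^(b)`,
where `Q(γ) = min{1, q_γ(p^(1)m^(1)/γ, …, p^(B)m^(B)/γ)}`. -/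
theorem stmt5 {Ω : Type*} [MeasurableSpace Ω] (μ : Measure Ω) [IsProbabilityMeasure μ]
    (B : ℕ) (hB : 0 < B) (p : Fin B → Ω → ℝ) (m : Fin B → ℝ) (I : Fin B → ℝ)
    (hmeas : ∀ b, Measurable (p b))
    (hp01 : ∀ b ω, p b ω ∈ Set.Icc (0:ℝ) 1)
    (hm : ∀ b, 1 ≤ m b)
    (hI : ∀ b, I b = 0 ∨ I b = 1)
    (hp1 : ∀ b, I b = 0 → ∀ ω, p b ω = 1)
    (hsuper : ∀ b, I b = 1 → ∀ u ∈ Set.Icc (0:ℝ) 1,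
      μ {ω | p b ω ≤ u} ≤ ENNReal.ofReal (u / m b))
    (α γmin : ℝ) (hα : α ∈ Set.Ioo (0:ℝ) 1) (hγ : γmin ∈ Set.Ioo (0:ℝ) 1) :
    μ {ω | sInf ((fun γ => min 1 (empQuantile5 γ (fun b => p b ω * m b / γ))) ''
            Set.Ioo γmin 1) ≤ α}
      ≤ ENNReal.ofReal ((1 - Real.log γmin) * (α / B) * ∑ b, I b / m b) := by
  obtain ⟨hα0, hα1⟩ := hα
  obtain ⟨hγ0, hγ1⟩ := hγ
  have hBR : (0:ℝ) < B := Nat.cast_pos.mpr hB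
  have hlog : (0:ℝ) ≤ 1 - Real.log γmin := by
    have := Real.log_neg hγ0 hγ1; linarith
  have hS0 : (0:ℝ) ≤ ∑ b, I b / m b := by
    apply Finset.sum_nonneg
    intro b _
    rcases hI b with h | h <;> rw [h]
    · simp
    · exact div_nonneg zero_le_one (le_trans zero_le_one (hm b))
  set S := ∑ b, I b / m b with hSdef
  set c := (1 - Real.log γmin) / B * S with hc
  have hc0 : 0 ≤ c := by positivity
  -- Step 1: bound for every α' ∈ (α, 1)
  have key : ∀ α' ∈ Set.Ioo α 1,
      μ {ω | sInf ((fun γ => min 1 (empQuantile5 γ (fun b => p b ω * m b / γ))) ''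
            Set.Ioo γmin 1) ≤ α} ≤ ENNReal.ofReal (c * α') := by
    intro α' hα'
    obtain ⟨hαα', hα'1⟩ := hα'
    have hα'0 : 0 < α' := lt_trans hα0 hαα'
    set F : Fin B → ℝ → ℝ :=
      fun b x => if x < α' / m b then (max γmin (x * m b / α'))⁻¹ else 0 with hFdef
    have hFmeas : ∀ b, Measurable fun ω => ENNReal.ofReal (F b (p b ω)) := by
      intro b
      have hFb : Measurable (F b) := Measurable.ite (measurableSet_Iio (a := α' / m b))
        ((measurable_const.max ((measurable_id.mul_const (m b)).div_const α')).inv)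
        measurable_const
      exact (hFb.comp (hmeas b)).ennreal_ofReal
    have hFnn : ∀ b x, 0 ≤ F b x := by
      intro b x
      simp only [hFdef]
      split
      · exact inv_nonneg.mpr (le_trans hγ0.le (le_max_left _ _))
      · exact le_refl 0
    set f : Ω → ENNReal := fun ω => (∑ b, ENNReal.ofReal (F b (p b ω))) / ENNReal.ofReal (B:ℝ)
      with hfdef
    have hfmeas : Measurable f := by
      apply Measurable.div
      · exact Finset.measurable_sum _ (fun b _ => hFmeas b)
      · exact measurable_const
    have hsub : {ω | sInf ((fun γ => min 1 (empQuantile5 γ (fun b => p b ω * m b / γ))) ''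
            Set.Ioo γmin 1) ≤ α} ⊆ {ω | 1 ≤ f ω} := by
      intro ω hω
      simp only [Set.mem_setOf_eq] at hω ⊢
      have hpt := stmt5_ptwise hB (fun b => p b ω) m hm (fun b => (hp01 b ω).1)
        α α' γmin hα'0 hαα' hα'1 hγ0 hγ1 hω
      show (1:ENNReal) ≤ (∑ b, ENNReal.ofReal (F b (p b ω))) / ENNReal.ofReal (B:ℝ)
      rw [← ENNReal.ofReal_sum_of_nonneg (fun b _ => hFnn b (p b ω)),
        ← ENNReal.ofReal_div_of_pos hBR]
      rw [show (1 : ENNReal) = ENNReal.ofReal 1 from ENNReal.ofReal_one.symm]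
      apply ENNReal.ofReal_le_ofReal
      rw [le_div_iff₀ hBR, one_mul]
      exact hpt
    calc μ _ ≤ μ {ω | 1 ≤ f ω} := measure_mono hsub
      _ ≤ ∫⁻ ω, f ω ∂μ := by
          have := mul_meas_ge_le_lintegral₀ (μ := μ) hfmeas.aemeasurable 1
          rwa [one_mul] at this
      _ = (∑ b, ∫⁻ ω, ENNReal.ofReal (F b (p b ω)) ∂μ) / ENNReal.ofReal (B:ℝ) := by
          have hBnz : (ENNReal.ofReal (B:ℝ)) ≠ 0 := by
            simp only [ne_eq, ENNReal.ofReal_eq_zero, not_le]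
            exact hBR
          simp only [hfdef, div_eq_mul_inv]
          rw [lintegral_mul_const' _ _ (ENNReal.inv_ne_top.mpr hBnz),
            lintegral_finset_sum _ (fun b _ => hFmeas b)]
      _ ≤ (∑ b, ENNReal.ofReal ((1 - Real.log γmin) * (α' / m b) * I b)) / ENNReal.ofReal (B:ℝ) := by
          apply ENNReal.div_le_div_right
          apply Finset.sum_le_sum
          intro b _
          rcases hI b with h | h
          · have hzero : ∀ ω, F b (p b ω) = 0 := by
              intro ω
              rw [hFdef]
              simp only
              rw [hp1 b h ω, if_neg]
              push_neg
              calc α' / m b ≤ α' / 1 :=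
                    div_le_div_of_nonneg_left hα'0.le one_pos (hm b)
                _ = α' := div_one α'
                _ ≤ 1 := hα'1.le
            simp only [hzero, ENNReal.ofReal_zero, lintegral_const, zero_mul]
            rw [h]
            simp
          · rw [h, mul_one]
            exact stmt5_int μ (p b) (hmeas b) (m b) α' γmin (hm b) hα'0 hα'1 hγ0 hγ1
              (hsuper b h)
      _ = ENNReal.ofReal ((∑ b, (1 - Real.log γmin) * (α' / m b) * I b) / B) := by
          rw [ENNReal.ofReal_div_of_pos hBR, ENNReal.ofReal_sum_of_nonneg]
          intro b _
          rcases hI b with h | h <;> rw [h]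
          · simp
          · have hmb : (0:ℝ) < m b := lt_of_lt_of_le one_pos (hm b)
            have : 0 ≤ α' / m b := by positivity
            nlinarith
      _ = ENNReal.ofReal (c * α') := by
          congr 1
          rw [hc, hSdef, Finset.sum_div, Finset.mul_sum, Finset.sum_mul]
          apply Finset.sum_congr rfl
          intro b _
          have hmb : (0:ℝ) < m b := lt_of_lt_of_le one_pos (hm b)
          field_simp
  -- Step 2: let α' → α
  have hfin : μ {ω | sInf ((fun γ => min 1 (empQuantile5 γ (fun b => p b ω * m b / γ))) ''
            Set.Ioo γmin 1) ≤ α} ≠ ⊤ := measure_ne_top μ _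
  have hreal : ∀ α' ∈ Set.Ioo α 1,
      (μ {ω | sInf ((fun γ => min 1 (empQuantile5 γ (fun b => p b ω * m b / γ))) ''
            Set.Ioo γmin 1) ≤ α}).toReal ≤ c * α' := by
    intro α' hα'
    exact (ENNReal.le_ofReal_iff_toReal_le hfin
      (mul_nonneg hc0 (le_trans hα0.le hα'.1.le))).mp (key α' hα')
  have hlim : (μ {ω | sInf ((fun γ => min 1 (empQuantile5 γ (fun b => p b ω * m b / γ))) ''
            Set.Ioo γmin 1) ≤ α}).toReal ≤ c * α := by
    apply le_of_forall_pos_le_add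
    intro ε hε
    have hcpos : (0:ℝ) < c + 1 := by linarith
    set α' := min ((α + 1) / 2) (α + ε / (c + 1)) with ha'
    have hα'mem : α' ∈ Set.Ioo α 1 := by
      constructor
      · apply lt_min (by linarith) (by nlinarith [div_pos hε hcpos])
      · exact lt_of_le_of_lt (min_le_left _ _) (by linarith)
    calc _ ≤ c * α' := hreal α' hα'mem
      _ ≤ c * (α + ε / (c + 1)) :=
          mul_le_mul_of_nonneg_left (min_le_right _ _) hc0
      _ ≤ c * α + ε := by
          have hle : c * (ε / (c + 1)) ≤ ε := by
            rw [mul_div_assoc', div_le_iff₀ hcpos]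
            nlinarith
          nlinarith [hle]
  have hfinal := (ENNReal.le_ofReal_iff_toReal_le hfin (mul_nonneg hc0 hα0.le)).mpr hlim
  refine le_trans hfinal (le_of_eq ?_)
  congr 1
  rw [hc]
  ring
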